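/- arXiv:2508.04754 — 8 statements merged into one kernel-verified Lean document; each statement's English description precedes it below -/
import Mathlib

section
/- For integers n ≥ k ≥ 1, the Ward-Lah number W(n,k) = (n+k)!/k! · C(n-1, k-1) satisfies the alternating-sum identity W(n,k) = ∑_{m=1}^{k} (-1)^{m+k} · C(n+k, n+m) · C(n+m-1, m-1) · (n+m)!/m!. -/
def wardLah (n k : ℕ) : ℚ :=
  if k = 0 then (if n = 0 then 1 else 0)
  else if n < k then 0
  else (Nat.factorial (n + k) : ℚ) / (Nat.factorial k) * (Nat.choose (n - 1) (k - 1))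

lemma lemB : ∀ k r N : ℕ, k ≤ r →
    ∑ m ∈ Finset.range (k+1), (-1:ℚ)^(k+m) * (k.choose m) * ((N+m).choose r)
      = (N.choose (r-k) : ℚ) := by
  intro k
  induction k with
  | zero => intro r N _; simp
  | succ k ih =>
    intro r N hkr
    have hk : k ≤ r := le_trans (Nat.le_succ k) hkr
    have hA := ih r (N+1) hk
    have hT := ih r N hk
    rw [Finset.sum_range_succ']
    have hsplit : ∀ m ∈ Finset.range (k+1),
        (-1:ℚ)^(k+1+(m+1)) * (((k+1).choose (m+1) : ℕ) : ℚ) * (((N+(m+1)).choose r : ℕ) : ℚ)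
        = (-1:ℚ)^(k+m) * (k.choose m) * (((N+1)+m).choose r)
          - (-1:ℚ)^(k+(m+1)) * (k.choose (m+1)) * ((N+(m+1)).choose r) := by
      intro m _
      rw [Nat.choose_succ_succ]
      have : N + (m+1) = (N+1) + m := by omega
      rw [this]
      push_cast
      ring
    rw [Finset.sum_congr rfl hsplit, Finset.sum_sub_distrib, hA]
    -- second sum: shifted version of hT
    have hg : ∑ m ∈ Finset.range (k+1),
        (-1:ℚ)^(k+(m+1)) * (k.choose (m+1)) * ((N+(m+1)).choose r)
        = (N.choose (r-k) : ℚ) - (-1:ℚ)^(k+0) * (k.choose 0) * ((N+0).choose r) := by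
      rw [← hT, Finset.sum_range_succ' (fun m => (-1:ℚ)^(k+m) * (k.choose m) * ((N+m).choose r)) k]
      have hz : (-1:ℚ)^(k+(k+1)) * (k.choose (k+1)) * ((N+(k+1)).choose r) = 0 := by
        simp [Nat.choose_eq_zero_of_lt (Nat.lt_succ_self k)]
      rw [Finset.sum_range_succ, hz]
      ring
    rw [hg]
    have hpascal : ((N+1).choose (r-k) : ℚ) = (N.choose (r-(k+1)) : ℚ) + (N.choose (r-k) : ℚ) := by
      have h1 : r - k = (r - (k+1)) + 1 := by omega
      rw [h1, Nat.choose_succ_succ]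
      push_cast
      rfl
    rw [hpascal]
    simp
    ring

theorem wardLah_alternating_sum (n k : ℕ) (hk : 1 ≤ k) (hkn : k ≤ n) :
    wardLah n k =
      ∑ m ∈ Finset.Icc 1 k, (-1 : ℚ) ^ (m + k) * (Nat.choose (n + k) (n + m)) *
        (Nat.choose (n + m - 1) (m - 1)) * (Nat.factorial (n + m) / Nat.factorial m) := by
  have hn : 1 ≤ n := le_trans hk hkn
  -- rewrite each summand
  have hterm : ∀ m ∈ Finset.Icc 1 k,
      (-1 : ℚ) ^ (m + k) * (Nat.choose (n + k) (n + m)) *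
        (Nat.choose (n + m - 1) (m - 1)) * (Nat.factorial (n + m) / Nat.factorial m)
      = ((Nat.factorial (n+k) : ℚ) / (Nat.factorial k)) *
        ((-1:ℚ)^(k+m) * (k.choose m) * (((n-1)+m).choose n)) := by
    intro m hm
    simp only [Finset.mem_Icc] at hm
    obtain ⟨hm1, hmk⟩ := hm
    -- choose symmetry
    have hsym : (Nat.choose (n + m - 1) (m - 1) : ℚ) = (((n-1)+m).choose n : ℚ) := by
      have e1 : n + m - 1 = (n-1) + m := by omega
      rw [e1, show m - 1 = ((n-1)+m) - n by omega,
        Nat.choose_symm (by omega : n ≤ (n-1)+m)]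
    rw [hsym]
    -- binomial/factorial computation
    have h1 : ((n+k).choose (n+m) : ℚ) = (Nat.factorial (n+k) : ℚ) /
        ((Nat.factorial (n+m)) * (Nat.factorial (k-m))) := by
      have e : n + k - (n + m) = k - m := by omega
      rw [Nat.cast_choose ℚ (by omega : n+m ≤ n+k), e]
    have h2 : (k.choose m : ℚ) = (Nat.factorial k : ℚ) /
        ((Nat.factorial m) * (Nat.factorial (k-m))) := by
      rw [Nat.cast_choose ℚ hmk]
    rw [h1, h2]
    have f1 : (Nat.factorial (n+m) : ℚ) ≠ 0 := Nat.cast_ne_zero.2 (Nat.factorial_ne_zero _)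
    have f2 : (Nat.factorial (k-m) : ℚ) ≠ 0 := Nat.cast_ne_zero.2 (Nat.factorial_ne_zero _)
    have f3 : (Nat.factorial m : ℚ) ≠ 0 := Nat.cast_ne_zero.2 (Nat.factorial_ne_zero _)
    have f4 : (Nat.factorial k : ℚ) ≠ 0 := Nat.cast_ne_zero.2 (Nat.factorial_ne_zero _)
    have hpow : (-1:ℚ)^(m+k) = (-1:ℚ)^(k+m) := by rw [add_comm]
    rw [hpow]
    field_simp
  rw [Finset.sum_congr rfl hterm, ← Finset.mul_sum]
  -- convert Icc 1 k sum to range (k+1) sum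
  have hzero : (-1:ℚ)^(k+0) * (k.choose 0) * (((n-1)+0).choose n) = 0 := by
    simp [Nat.choose_eq_zero_of_lt (by omega : n - 1 < n)]
  have hIcc : ∑ m ∈ Finset.Icc 1 k, ((-1:ℚ)^(k+m) * (k.choose m) * (((n-1)+m).choose n))
      = ∑ m ∈ Finset.range (k+1), ((-1:ℚ)^(k+m) * (k.choose m) * (((n-1)+m).choose n)) := by
    rw [Finset.sum_range_succ' (fun m => (-1:ℚ)^(k+m) * (k.choose m) * (((n-1)+m).choose n)) k,
      hzero, add_zero]
    rw [show Finset.Icc 1 k = Finset.Ico 1 (k+1) by rw [Finset.Ico_add_one_right_eq_Icc]]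
    rw [Finset.sum_Ico_eq_sum_range]
    simp [add_comm]
  rw [hIcc, lemB k n (n-1) hkn]
  have hfin : ((n-1).choose (n-k) : ℚ) = ((n-1).choose (k-1) : ℚ) := by
    have e : (n-1) - (k-1) = n - k := by omega
    rw [← e, Nat.choose_symm (by omega)]
  rw [hfin]
  unfold wardLah
  rw [if_neg (by omega), if_neg (by omega)]
end

section
/- For integers n ≥ k ≥ 1 with k ≥ 2, the Ward-Lah numbers satisfy the triangular recurrence W(n,k) = ((n+k)(n-1)/n) · ( W(n-1,k) + ((n+k-1)/(k-1)) · W(n-1,k-1) ). -/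
theorem wardLah_triangular_rec (n k : ℕ) (hk : 2 ≤ k) (hkn : k ≤ n) :
    wardLah n k =
      ((n : ℚ) + k) * ((n : ℚ) - 1) / n *
        (wardLah (n - 1) k + ((n : ℚ) + k - 1) / ((k : ℚ) - 1) * wardLah (n - 1) (k - 1)) := by
  obtain ⟨j, rfl⟩ : ∃ j, k = j + 2 := ⟨k - 2, by omega⟩
  rcases Nat.lt_or_ge n (j + 3) with h | h
  · have hn : n = j + 2 := by omega
    subst hn
    simp only [wardLah]
    norm_num
    have f1 : (j + 2 + (j + 2)).factorial
        = (2 * j + 4) * ((2 * j + 3) * (j + 1 + (j + 1)).factorial) := by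
      rw [show j + 2 + (j + 2) = j + 1 + (j + 1) + 1 + 1 from by ring,
          Nat.factorial_succ, Nat.factorial_succ]
      generalize (j + 1 + (j + 1)).factorial = F
      ring
    have f2 : (j + 2).factorial = (j + 2) * (j + 1).factorial := rfl
    rw [f1, f2]
    obtain ⟨A, hA, h1⟩ : ∃ A : ℚ, ((j + 1 + (j + 1)).factorial : ℚ) = A ∧ A ≠ 0 :=
      ⟨_, rfl, by exact_mod_cast (Nat.factorial_pos _).ne'⟩
    obtain ⟨B, hB, h2⟩ : ∃ B : ℚ, ((j + 1).factorial : ℚ) = B ∧ B ≠ 0 :=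
      ⟨_, rfl, by exact_mod_cast (Nat.factorial_pos _).ne'⟩
    push_cast [hA, hB]
    have h3 : (j : ℚ) + 1 ≠ 0 := by positivity
    have h4 : (j : ℚ) + 2 ≠ 0 := by positivity
    have h5 : (j : ℚ) * B * 3 + (j : ℚ) ^ 2 * B + B * 2 ≠ 0 := by
      have e : (j : ℚ) * B * 3 + (j : ℚ) ^ 2 * B + B * 2 = B * (((j : ℚ) + 1) * ((j : ℚ) + 2)) := by
        ring
      rw [e]; exact mul_ne_zero h2 (mul_ne_zero h3 h4)
    have h6 : (j : ℚ) + 2 - 1 ≠ 0 := by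
      rw [show (j : ℚ) + 2 - 1 = (j : ℚ) + 1 from by ring]; exact h3
    rw [div_mul_div_comm, div_mul_div_comm,
        div_eq_div_iff (mul_ne_zero h4 h2) (mul_ne_zero h4 (mul_ne_zero h6 h2))]
    ring
  · obtain ⟨m, rfl⟩ : ∃ m, n = m + j + 3 := ⟨n - j - 3, by omega⟩
    simp only [wardLah]
    norm_num
    rw [if_neg (by omega), if_neg (by omega)]
    have c1 : (((m + j + 2).choose (j + 1) : ℕ) : ℚ)
        = ((m + j + 2).factorial : ℚ) / ((j + 1).factorial * (m + 1).factorial) := by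
      rw [Nat.cast_choose ℚ (by omega), show m + j + 2 - (j + 1) = m + 1 from by omega]
    have c2 : (((m + j + 1).choose (j + 1) : ℕ) : ℚ)
        = ((m + j + 1).factorial : ℚ) / ((j + 1).factorial * m.factorial) := by
      rw [Nat.cast_choose ℚ (by omega), show m + j + 1 - (j + 1) = m from by omega]
    have c3 : (((m + j + 1).choose j : ℕ) : ℚ)
        = ((m + j + 1).factorial : ℚ) / (j.factorial * (m + 1).factorial) := by
      rw [Nat.cast_choose ℚ (by omega), show m + j + 1 - j = m + 1 from by omega]
    rw [c1, c2, c3]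
    have F1 : (m + j + 3 + (j + 2)).factorial
        = (m + 2 * j + 5) * ((m + 2 * j + 4) * (m + j + 2 + (j + 1)).factorial) := by
      rw [show m + j + 3 + (j + 2) = m + j + 2 + (j + 1) + 1 + 1 from by ring,
          Nat.factorial_succ, Nat.factorial_succ]
      generalize (m + j + 2 + (j + 1)).factorial = F
      ring
    have F2 : (m + j + 2 + (j + 2)).factorial
        = (m + 2 * j + 4) * (m + j + 2 + (j + 1)).factorial := by
      rw [show m + j + 2 + (j + 2) = m + j + 2 + (j + 1) + 1 from by ring,
          Nat.factorial_succ]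
      generalize (m + j + 2 + (j + 1)).factorial = F
      ring
    have F3 : (m + j + 2).factorial = (m + j + 2) * (m + j + 1).factorial := rfl
    have F4 : (j + 2).factorial = (j + 2) * ((j + 1) * j.factorial) := rfl
    have F5 : (j + 1).factorial = (j + 1) * j.factorial := rfl
    have F6 : (m + 1).factorial = (m + 1) * m.factorial := rfl
    rw [F1, F2, F3, F4, F5, F6]
    obtain ⟨P, hP, hP0⟩ : ∃ P : ℚ, ((m + j + 1).factorial : ℚ) = P ∧ P ≠ 0 :=
      ⟨_, rfl, by exact_mod_cast (Nat.factorial_pos _).ne'⟩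
    obtain ⟨Q, hQ, hQ0⟩ : ∃ Q : ℚ, ((m + j + 2 + (j + 1)).factorial : ℚ) = Q ∧ Q ≠ 0 :=
      ⟨_, rfl, by exact_mod_cast (Nat.factorial_pos _).ne'⟩
    obtain ⟨R, hR, hR0⟩ : ∃ R : ℚ, (j.factorial : ℚ) = R ∧ R ≠ 0 :=
      ⟨_, rfl, by exact_mod_cast (Nat.factorial_pos _).ne'⟩
    obtain ⟨S, hS, hS0⟩ : ∃ S : ℚ, (m.factorial : ℚ) = S ∧ S ≠ 0 :=
      ⟨_, rfl, by exact_mod_cast (Nat.factorial_pos _).ne'⟩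
    push_cast [hP, hQ, hR, hS]
    rw [show ((j : ℚ) + 2 - 1) = (j : ℚ) + 1 from by ring]
    have hj1 : (j : ℚ) + 1 ≠ 0 := by positivity
    have hj2 : (j : ℚ) + 2 ≠ 0 := by positivity
    have hm1 : (m : ℚ) + 1 ≠ 0 := by positivity
    have hn : (m : ℚ) + (j : ℚ) + 3 ≠ 0 := by positivity
    field_simp
    ring
end

section
/- For integers n ≥ k ≥ 1, the Ward-Lah numbers satisfy the integer-coefficient triangular recurrence W(n,k) = 2(n+k-1) · W(n-1,k-1) + (n+2k-1) · W(n-1,k). -/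
theorem wardLah_integer_triangular_rec (n k : ℕ) (hk : 1 ≤ k) (hkn : k ≤ n) :
    wardLah n k =
      2 * ((n : ℚ) + k - 1) * wardLah (n - 1) (k - 1) +
        ((n : ℚ) + 2 * k - 1) * wardLah (n - 1) k := by
  obtain ⟨j, rfl⟩ : ∃ j, k = j + 1 := ⟨k - 1, by omega⟩
  obtain ⟨m, rfl⟩ : ∃ m, n = m + 1 := ⟨n - 1, by omega⟩
  have hjm : j ≤ m := by omega
  simp only [Nat.add_sub_cancel]
  have hne : ∀ a : ℕ, (Nat.factorial a : ℚ) ≠ 0 := fun a => by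
    exact_mod_cast (Nat.factorial_pos a).ne'
  rcases Nat.eq_zero_or_pos j with rfl | hj
  · rcases Nat.eq_zero_or_pos m with rfl | hm
    · norm_num [wardLah, Nat.factorial]
    · obtain ⟨e, rfl⟩ : ∃ e, m = e + 1 := ⟨m - 1, by omega⟩
      simp only [wardLah]
      split_ifs <;> first
      | (exfalso; first | assumption | omega)
      | · rw [show e+1+1-1 = e+1 from by omega, show 0+1-1 = 0 from by omega,
            show e+1-1 = e from by omega]
          rw [Nat.choose_zero_right, Nat.choose_zero_right]
          rw [show e+1+1+(0+1) = (e+1+1)+1 from by omega,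
            show e+1+(0+1) = (e+1)+1 from by omega]
          simp only [Nat.factorial_succ, Nat.factorial_one]
          field_simp
          push_cast
          ring
  · rcases eq_or_lt_of_le hjm with rfl | hlt
    · simp only [wardLah]
      split_ifs <;> first
      | (exfalso; first | assumption | omega)
      | · rw [show j+1-1 = j from by omega]
          rw [Nat.choose_self, Nat.choose_self]
          rw [show j+1+(j+1) = (j+j)+1+1 from by omega]
          simp only [Nat.factorial_succ]
          have h1 : ((j : ℚ) + 1) ≠ 0 := by positivity
          field_simp
          push_cast
          ring
    · obtain ⟨e, rfl⟩ : ∃ e, m = j + e + 1 := ⟨m - j - 1, by omega⟩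
      obtain ⟨i, rfl⟩ : ∃ i, j = i + 1 := ⟨j - 1, by omega⟩
      simp only [wardLah]
      split_ifs <;> first
      | (exfalso; first | assumption | omega)
      | · rw [show i+1+e+1+1+(i+1+1) = (i+i+e+2)+1+1+1 from by omega,
            show i+1+e+1+(i+1+1) = (i+i+e+2)+1+1 from by omega,
            show i+1+e+1+(i+1) = (i+i+e+2)+1 from by omega,
            show i+1+e+1+1-1 = (i+e+1)+1 from by omega,
            show i+1+1-1 = i+1 from by omega,
            show i+1+e+1-1 = i+e+1 from by omega,
            show i+1-1 = i from by omega]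
          rw [Nat.cast_choose ℚ (show i+1 ≤ (i+e+1)+1 by omega),
            Nat.cast_choose ℚ (show i ≤ i+e+1 by omega),
            Nat.cast_choose ℚ (show i+1 ≤ i+e+1 by omega),
            show (i+e+1)+1-(i+1) = e+1 from by omega,
            show i+e+1-i = e+1 from by omega,
            show i+e+1-(i+1) = e from by omega]
          simp only [Nat.factorial_succ]
          have h1 : ((i : ℚ) + 1) ≠ 0 := by positivity
          have h2 : ((e : ℚ) + 1) ≠ 0 := by positivity
          field_simp
          push_cast
          ring
end

section
/- For positive integers n, k, m with n ≥ k ≥ 1 and n - m ≥ 1, the Ward-Lah numbers satisfy the horizontal recurrence W(n,k) = ((n+k)!/k!) · ∑_{j=0}^{m} ((k-j)!/(n-m+k-j)!) · C(m,j) · W(n-m, k-j). -/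
lemma vandermonde_key (m k b : ℕ) (hk : 1 ≤ k) :
    ∑ j ∈ Finset.range (m + 1),
      (if j < k then m.choose j * b.choose (k - 1 - j) else 0) = (m + b).choose (k - 1) := by
  have hv : (m + b).choose (k - 1) = ∑ j ∈ Finset.range k, m.choose j * b.choose (k - 1 - j) := by
    rw [Nat.add_choose_eq,
      Finset.Nat.sum_antidiagonal_eq_sum_range_succ (fun i j => m.choose i * b.choose j)]
    rw [show (k - 1).succ = k by omega]
  set N := max (m + 1) k with hN
  have h1 : ∑ j ∈ Finset.range (m + 1),
      (if j < k then m.choose j * b.choose (k - 1 - j) else 0) =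
      ∑ j ∈ Finset.range N, (if j < k then m.choose j * b.choose (k - 1 - j) else 0) := by
    apply Finset.sum_subset (Finset.range_subset_range.2 (le_max_left _ _))
    intro x hx hx'
    simp only [Finset.mem_range] at hx hx'
    have : m.choose x = 0 := Nat.choose_eq_zero_of_lt (by omega)
    simp [this]
  have h2 : ∑ j ∈ Finset.range k, m.choose j * b.choose (k - 1 - j) =
      ∑ j ∈ Finset.range N, (if j < k then m.choose j * b.choose (k - 1 - j) else 0) := by
    rw [← Finset.sum_filter]
    apply Finset.sum_congr _ (fun _ _ => rfl)
    ext x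
    simp only [Finset.mem_range, Finset.mem_filter]
    omega
  rw [h1, hv, h2]

theorem wardLah_horizontal_rec (n k m : ℕ) (hk : 1 ≤ k) (hkn : k ≤ n)
    (hm : 1 ≤ m) (hmn : 1 ≤ n - m) :
    wardLah n k =
      ((Nat.factorial (n + k) : ℚ) / Nat.factorial k) *
        ∑ j ∈ Finset.range (m + 1),
          ((Nat.factorial (k - j) : ℚ) / Nat.factorial (n - m + k - j)) *
            (Nat.choose m j) * wardLah (n - m) (k - j) := by
  have hsum : ∑ j ∈ Finset.range (m + 1),
      ((Nat.factorial (k - j) : ℚ) / Nat.factorial (n - m + k - j)) *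
        (Nat.choose m j) * wardLah (n - m) (k - j) =
      ((Nat.choose (n - 1) (k - 1) : ℕ) : ℚ) := by
    have step : ∀ j ∈ Finset.range (m + 1),
        ((Nat.factorial (k - j) : ℚ) / Nat.factorial (n - m + k - j)) *
          (Nat.choose m j) * wardLah (n - m) (k - j) =
        (((if j < k then m.choose j * (n - m - 1).choose (k - 1 - j) else 0 : ℕ)) : ℚ) := by
      intro j hj
      simp only [Finset.mem_range] at hj
      by_cases hjk : j < k
      · rw [if_pos hjk]
        by_cases hle : k - j ≤ n - m
        · rw [wardLah, if_neg (by omega), if_neg (by omega)]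
          have he : (n - m) + (k - j) = n - m + k - j := by omega
          have h1 : ((k - j).factorial : ℚ) ≠ 0 := Nat.cast_ne_zero.2 (Nat.factorial_ne_zero _)
          have h2 : ((n - m + k - j).factorial : ℚ) ≠ 0 := Nat.cast_ne_zero.2 (Nat.factorial_ne_zero _)
          have h3 : k - j - 1 = k - 1 - j := by omega
          rw [he, h3]
          push_cast
          field_simp
        · rw [wardLah, if_neg (by omega), if_pos (by omega)]
          have : (n - m - 1).choose (k - 1 - j) = 0 := Nat.choose_eq_zero_of_lt (by omega)
          simp [this]
      · rw [if_neg hjk]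
        have : k - j = 0 := by omega
        rw [this, wardLah, if_pos rfl, if_neg (by omega)]
        simp
    rw [Finset.sum_congr rfl step, ← Nat.cast_sum]
    congr 1
    have := vandermonde_key m k (n - m - 1) hk
    rw [this]
    congr 1
    omega
  rw [hsum, wardLah, if_neg (by omega), if_neg (by omega)]
end

section
/- For integers n ≥ 2 and k ≥ 1 with n ≥ k, the Ward-Lah numbers satisfy the third-order recurrence W(n,k) = 2(2n-1) · W(n-1,k-1) - n(n-2) · W(n-2,k) + (2n-1) · W(n-1,k). -/
lemma fs1 (a : ℕ) : ((Nat.factorial (a+1)) : ℚ) = (a+1) * Nat.factorial a := by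
  rw [Nat.factorial_succ]; push_cast; ring

lemma fs2 (a : ℕ) : ((Nat.factorial (a+2)) : ℚ) = (a+2)*(a+1) * Nat.factorial a := by
  rw [Nat.factorial_succ, Nat.factorial_succ]; push_cast; ring

lemma fs3 (a : ℕ) : ((Nat.factorial (a+3)) : ℚ) = (a+3)*(a+2)*(a+1) * Nat.factorial a := by
  rw [Nat.factorial_succ, Nat.factorial_succ, Nat.factorial_succ]; push_cast; ring

lemma fac_ne (a : ℕ) : ((Nat.factorial a : ℚ)) ≠ 0 := by
  exact_mod_cast Nat.factorial_ne_zero a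

lemma wardLah_eq (n k : ℕ) (h1 : 1 ≤ k) (h2 : k ≤ n) :
    wardLah n k = (Nat.factorial (n + k) : ℚ) / (Nat.factorial k) * (Nat.choose (n - 1) (k - 1)) := by
  rw [wardLah, if_neg (by omega), if_neg (by omega)]

lemma wardLah_zero_right (n : ℕ) (h : n ≠ 0) : wardLah n 0 = 0 := by
  rw [wardLah, if_pos rfl, if_neg h]

lemma wardLah_zero (n k : ℕ) (h : n < k) : wardLah n k = 0 := by
  rw [wardLah, if_neg (by omega), if_pos h]

theorem wardLah_order_three_rec (n k : ℕ) (hn : 2 ≤ n) (hk : 1 ≤ k) (hkn : k ≤ n) :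
    wardLah n k =
      2 * (2 * (n : ℚ) - 1) * wardLah (n - 1) (k - 1) -
        (n : ℚ) * ((n : ℚ) - 2) * wardLah (n - 2) k +
        (2 * (n : ℚ) - 1) * wardLah (n - 1) k := by
  obtain ⟨j, rfl⟩ : ∃ j, k = j + 1 := ⟨k - 1, by omega⟩
  rcases Nat.eq_zero_or_pos j with rfl | hj
  · -- k = 1
    rcases Nat.lt_or_ge n 3 with h3 | h3
    · obtain rfl : n = 2 := by omega
      norm_num [wardLah, Nat.factorial]
    · obtain ⟨m, rfl⟩ : ∃ m, n = m + 3 := ⟨n - 3, by omega⟩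
      simp only [show m+3-1 = m+2 from by omega, show m+3-2 = m+1 from by omega,
        show 0+1-1 = 0 from rfl, show (0:ℕ)+1 = 1 from rfl]
      rw [wardLah_zero_right (m+2) (by omega),
        wardLah_eq (m+3) 1 (by omega) (by omega),
        wardLah_eq (m+1) 1 (by omega) (by omega),
        wardLah_eq (m+2) 1 (by omega) (by omega)]
      simp only [Nat.choose_zero_right, Nat.sub_self, Nat.factorial_one, Nat.cast_one]
      simp only [show m+3+1 = m+1+3 from by omega, show m+1+1 = m+1+1 from rfl,
        show m+2+1 = m+1+2 from by omega]
      rw [fs3 (m+1), fs2 (m+1), fs1 (m+1)]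
      push_cast
      ring
  · obtain ⟨i, rfl⟩ : ∃ i, j = i + 1 := ⟨j - 1, by omega⟩
    -- k = i + 2
    rcases Nat.lt_or_ge n (i + 3) with h | h
    · obtain rfl : n = i + 2 := by omega
      simp only [show i+2-1 = i+1 from by omega, show i+2-2 = i from by omega,
        show i+1+1-1 = i+1 from by omega]
      rw [wardLah_zero i (i+1+1) (by omega), wardLah_zero (i+1) (i+1+1) (by omega),
        wardLah_eq (i+2) (i+1+1) (by omega) (by omega),
        wardLah_eq (i+1) (i+1) (by omega) (by omega)]
      simp only [show i+2-1 = i+1 from by omega, show i+1+1-1 = i+1 from by omega,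
        show i+1-1 = i from by omega, Nat.choose_self, Nat.cast_one]
      simp only [show i+2+(i+1+1) = 2*i+2+2 from by omega, show i+1+(i+1) = 2*i+2 from by omega]
      rw [fs2 (2*i+2), fs1 (i+1)]
      field_simp
      push_cast
      ring
    rcases Nat.lt_or_ge n (i + 4) with h2 | h2
    · obtain rfl : n = i + 3 := by omega
      simp only [show i+3-1 = i+2 from by omega, show i+3-2 = i+1 from by omega,
        show i+1+1-1 = i+1 from by omega]
      rw [wardLah_zero (i+1) (i+1+1) (by omega),
        wardLah_eq (i+3) (i+1+1) (by omega) (by omega),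
        wardLah_eq (i+2) (i+1) (by omega) (by omega),
        wardLah_eq (i+2) (i+1+1) (by omega) (by omega)]
      simp only [show i+3-1 = i+2 from by omega, show i+1+1-1 = i+1 from by omega,
        show i+2-1 = i+1 from by omega, show i+1-1 = i from by omega]
      rw [Nat.cast_choose ℚ (show i+1 ≤ i+2 by omega),
        Nat.cast_choose ℚ (show i ≤ i+1 by omega), Nat.choose_self]
      simp only [show i+2-(i+1) = 1 from by omega, show i+1-i = 1 from by omega,
        Nat.factorial_one, Nat.cast_one]
      field_simp [fac_ne]
      simp only [show i+3+(i+1+1) = 2*i+3+2 from by omega,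
        show i+2+(i+1) = 2*i+3 from by omega, show i+2+(i+1+1) = 2*i+3+1 from by omega,
        show i+1+1 = i+1+1 from rfl, show i+2 = i+1+1 from rfl]
      rw [fs2 (2*i+3), fs1 (2*i+3), fs1 (i+1), fs1 i]
      push_cast
      ring
    · obtain ⟨t, rfl⟩ : ∃ t, n = i + t + 4 := ⟨n - i - 4, by omega⟩
      simp only [show i+t+4-1 = i+t+3 from by omega, show i+t+4-2 = i+t+2 from by omega,
        show i+1+1-1 = i+1 from by omega]
      rw [wardLah_eq (i+t+4) (i+1+1) (by omega) (by omega),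
        wardLah_eq (i+t+3) (i+1) (by omega) (by omega),
        wardLah_eq (i+t+2) (i+1+1) (by omega) (by omega),
        wardLah_eq (i+t+3) (i+1+1) (by omega) (by omega)]
      simp only [show i+t+4-1 = i+t+3 from by omega, show i+t+3-1 = i+t+2 from by omega,
        show i+t+2-1 = i+t+1 from by omega, show i+1+1-1 = i+1 from by omega,
        show i+1-1 = i from by omega]
      rw [Nat.cast_choose ℚ (show i+1 ≤ i+t+3 by omega),
        Nat.cast_choose ℚ (show i ≤ i+t+2 by omega),
        Nat.cast_choose ℚ (show i+1 ≤ i+t+1 by omega),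
        Nat.cast_choose ℚ (show i+1 ≤ i+t+2 by omega)]
      simp only [show i+t+3-(i+1) = t+2 from by omega, show i+t+2-i = t+2 from by omega,
        show i+t+1-(i+1) = t from by omega, show i+t+2-(i+1) = t+1 from by omega]
      field_simp [fac_ne]
      simp only [show i+t+4+(i+1+1) = 2*i+t+4+2 from by omega,
        show i+t+3+(i+1) = 2*i+t+4 from by omega,
        show i+t+2+(i+1+1) = 2*i+t+4 from by omega,
        show i+t+3+(i+1+1) = 2*i+t+4+1 from by omega,
        show i+t+3 = i+t+1+2 from by omega, show i+t+2 = i+t+1+1 from by omega,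
        show i+1+1 = i+1+1 from rfl]
      rw [fs2 (2*i+t+4), fs1 (2*i+t+4), fs2 (i+t+1), fs1 (i+t+1), fs1 (i+1), fs1 i,
        fs2 t, fs1 t]
      push_cast
      ring
end

section
/- For a fixed positive integer k, the exponential generating function identity ∑_{n≥k} W(n-k, k) · x^n / n! = (1/k!) · x^{2k} / (1-x)^k holds as an identity of formal power series, where W(m,k) = (m+k)!/k! · C(m-1, k-1) for m ≥ k and W(m,k) = 0 for 0 < m < k, W(0,k) = 0. -/
open PowerSeries

lemma one_sub_X_inv : (1 - X : ℚ⟦X⟧)⁻¹ = mk 1 := by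
  rw [PowerSeries.inv_eq_iff_mul_eq_one (by simp)]
  exact mk_one_mul_one_sub_eq_one ℚ

theorem wardLah_egf (k : ℕ) (hk : 1 ≤ k) :
    PowerSeries.mk (fun n => if k ≤ n then wardLah (n - k) k / (Nat.factorial n : ℚ) else 0) =
      PowerSeries.C (R := ℚ) (1 / Nat.factorial k) * (PowerSeries.X : PowerSeries ℚ) ^ (2 * k) *
        ((1 - PowerSeries.X : PowerSeries ℚ)⁻¹) ^ k := by
  have h1 : ((1 - X : ℚ⟦X⟧)⁻¹) ^ k = mk fun n => (Nat.choose (k - 1 + n) (k - 1) : ℚ) := by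
    rw [one_sub_X_inv, ← invOneSubPow_val_eq_mk_sub_one_add_choose_of_pos ℚ k hk,
      invOneSubPow_eq_inv_one_sub_pow]
    rfl
  rw [h1, mul_assoc]
  ext n
  rw [coeff_mk, coeff_C_mul, coeff_X_pow_mul', coeff_mk]
  rcases le_or_gt (2 * k) n with h2 | h2
  · rw [if_pos h2, if_pos (by omega)]
    have hm : ¬ (n - k < k) := by omega
    have hk0 : k ≠ 0 := by omega
    rw [wardLah, if_neg hk0, if_neg hm]
    have he : n - k + k = n := by omega
    have he2 : k - 1 + (n - 2 * k) = n - k - 1 := by omega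
    rw [he, he2]
    have hn : (Nat.factorial n : ℚ) ≠ 0 := by exact_mod_cast Nat.factorial_ne_zero n
    have hk' : (Nat.factorial k : ℚ) ≠ 0 := by exact_mod_cast Nat.factorial_ne_zero k
    field_simp
  · rw [if_neg (show ¬ 2 * k ≤ n by omega), mul_zero]
    rcases le_or_gt k n with h3 | h3
    · rw [if_pos h3, wardLah, if_neg (by omega), if_pos (by omega)]
      simp
    · rw [if_neg (by omega)]
end

section
/- For integers n ≥ k ≥ 1, the identity (n-k+1)^{rising (n-k)} · L(n,k) = C(n,k) · ∑_{j=0}^{k} C(k,j) · T(n-k, j) holds, where L(n,k) = n!/k! · C(n-1,k-1) are the Lah numbers, T(m,j) = (2m)! · C(m-1, j-1) for m ≥ j ≥ 1, T(m,j) = 0 for j > m or j = 0 with m ≥ 1, T(0,0) = 1, and x^{rising n} denotes the rising factorial x(x+1)⋯(x+n-1). -/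
def variedWardLah (n k : ℕ) : ℚ :=
  if k = 0 then (if n = 0 then 1 else 0)
  else if n < k then 0
  else (Nat.factorial (2 * n) : ℚ) * (Nat.choose (n - 1) (k - 1))

lemma vdm (k s : ℕ) :
    ∑ i ∈ Finset.range k, Nat.choose k (i+1) * Nat.choose s i = Nat.choose (k + s) (s+1) := by
  rw [Nat.add_choose_eq, Finset.Nat.sum_antidiagonal_eq_sum_range_succ_mk,
    Finset.sum_range_succ']
  simp only [Nat.choose_zero_right, Nat.succ_sub_one, Nat.choose_succ_self, mul_zero,
    Nat.sub_zero, one_mul, add_zero]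
  have h1 : ∑ x ∈ Finset.range (s+1), k.choose (x+1) * s.choose (s + 1 - (x+1))
      = ∑ x ∈ Finset.range (s+1), k.choose (x+1) * s.choose x :=
    Finset.sum_congr rfl (fun x hx => by
      rw [Nat.succ_sub_succ, Nat.choose_symm (Nat.lt_succ_iff.mp (Finset.mem_range.mp hx))])
  rw [h1]
  have h2 : ∑ x ∈ Finset.range k, k.choose (x+1) * s.choose x
      = ∑ x ∈ Finset.range (k + (s+1)), k.choose (x+1) * s.choose x :=
    Finset.sum_subset (Finset.range_subset_range.mpr (Nat.le_add_right k (s+1)))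
      (fun x _ hx => by
        rw [Finset.mem_range, not_lt] at hx
        rw [Nat.choose_eq_zero_of_lt (by omega), zero_mul])
  have h3 : ∑ x ∈ Finset.range (s+1), k.choose (x+1) * s.choose x
      = ∑ x ∈ Finset.range (k + (s+1)), k.choose (x+1) * s.choose x :=
    Finset.sum_subset (Finset.range_subset_range.mpr (by omega))
      (fun x _ hx => by
        rw [Finset.mem_range, not_lt] at hx
        rw [Nat.choose_eq_zero_of_lt (show s < x by omega), mul_zero])
  rw [h2, h3]

theorem lah_variedWardLah_relation (n k : ℕ) (hk : 1 ≤ k) (hkn : k ≤ n) :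
    ((Nat.ascFactorial (n - k + 1) (n - k) : ℚ)) *
        ((Nat.factorial n : ℚ) / Nat.factorial k * (Nat.choose (n - 1) (k - 1))) =
      (Nat.choose n k : ℚ) *
        ∑ j ∈ Finset.range (k + 1), (Nat.choose k j : ℚ) * variedWardLah (n - k) j := by
  rcases eq_or_lt_of_le hkn with rfl | hlt
  · -- k = n
    have h0 : k - k = 0 := Nat.sub_self k
    rw [h0]
    have hsum : ∑ j ∈ Finset.range (k + 1), (Nat.choose k j : ℚ) * variedWardLah 0 j = 1 := by
      rw [Finset.sum_range_succ']
      have : ∀ i ∈ Finset.range k, (Nat.choose k (i+1) : ℚ) * variedWardLah 0 (i+1) = 0 := by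
        intro i _
        simp [variedWardLah]
      rw [Finset.sum_congr rfl this]
      simp [variedWardLah]
    rw [hsum]
    rw [Nat.ascFactorial_zero, Nat.choose_self, Nat.choose_self]
    have : (Nat.factorial k : ℚ) ≠ 0 := Nat.cast_ne_zero.mpr (Nat.factorial_ne_zero k)
    field_simp
    norm_num
  · set m := n - k with hmdef
    have hm1 : 1 ≤ m := by omega
    have hsum : ∑ j ∈ Finset.range (k + 1), (Nat.choose k j : ℚ) * variedWardLah m j
        = (Nat.factorial (2*m) : ℚ) * (Nat.choose (n-1) (k-1)) := by
      have hc : ∀ j ∈ Finset.range (k+1), (Nat.choose k j : ℚ) * variedWardLah m j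
          = if j = 0 then 0 else
            (Nat.choose k j : ℚ) * ((Nat.factorial (2*m) : ℚ) * (Nat.choose (m-1) (j-1))) := by
        intro j _
        rcases eq_or_ne j 0 with rfl | hj
        · simp [variedWardLah, Nat.one_le_iff_ne_zero.mp hm1]
        · simp only [hj, if_false, variedWardLah]
          split_ifs with h
          · rw [Nat.choose_eq_zero_of_lt (by omega : m - 1 < j - 1)]
            simp
          · rfl
      rw [Finset.sum_congr rfl hc, Finset.sum_range_succ']
      simp only [Nat.succ_ne_zero, if_false, if_pos rfl, add_zero, Nat.add_sub_cancel, if_true]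
      have : ∀ i ∈ Finset.range k,
          (Nat.choose k (i+1) : ℚ) * ((Nat.factorial (2*m) : ℚ) * (Nat.choose (m-1) i))
          = (Nat.factorial (2*m) : ℚ) * ((Nat.choose k (i+1) * Nat.choose (m-1) i : ℕ) : ℚ) := by
        intro i _; push_cast; ring
      rw [Finset.sum_congr rfl this, ← Finset.mul_sum, ← Nat.cast_sum, vdm k (m-1)]
      rw [show k + (m-1) = n-1 by omega, show m - 1 + 1 = m by omega,
        show (n-1).choose m = (n-1).choose (k-1) from
          (Nat.choose_symm_of_eq_add (by omega)).symm]
    rw [hsum]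
    have h2m : (Nat.factorial m : ℚ) * (Nat.ascFactorial (m+1) m : ℚ) = Nat.factorial (2*m) := by
      rw [← Nat.cast_mul, Nat.factorial_mul_ascFactorial, two_mul]
    have hcf : (Nat.choose n k : ℚ) * Nat.factorial k * Nat.factorial m
        = Nat.factorial n := by
      rw [← Nat.cast_mul, ← Nat.cast_mul, Nat.choose_mul_factorial_mul_factorial hkn]
    have hkfac : (Nat.factorial k : ℚ) ≠ 0 := Nat.cast_ne_zero.mpr (Nat.factorial_ne_zero k)
    have hmfac : (Nat.factorial m : ℚ) ≠ 0 := Nat.cast_ne_zero.mpr (Nat.factorial_ne_zero m)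
    field_simp
    linear_combination ((Nat.choose n k : ℚ) * (Nat.choose (n-1) (k-1)) * Nat.factorial k) * h2m - ((Nat.ascFactorial (m+1) m : ℚ) * (Nat.choose (n-1) (k-1))) * hcf
end

section
/- For integers n ≥ 2 and k ≥ 2 with n ≥ k, the binomial Ward-Lah numbers satisfy the fifth-order recurrence B(n,k) = (-4(n-2)(2n-1)^2/n) · ( B(n-2,k-2) - 2·B(n-2,k-1) + B(n-2,k) ) + (4(2n-1)/(n(2n-3))) · ( (2(n-1)^2 - 1)·B(n-1,k-1) + 2(n-1)^2·B(n-1,k) ). -/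
def binomialWardLah (n k : ℕ) : ℚ :=
  if k = 0 then (if n = 0 then 1 else 0)
  else if n < k then 0
  else (Nat.factorial (2 * n) : ℚ) / (Nat.factorial k * Nat.factorial (n - k)) * (Nat.choose (n - 1) (k - 1))

lemma bwl_zero (n k : ℕ) (h : n < k) : binomialWardLah n k = 0 := by
  unfold binomialWardLah
  rw [if_neg (by omega), if_pos h]

lemma bwl_k0 (n : ℕ) (h : n ≠ 0) : binomialWardLah n 0 = 0 := by
  unfold binomialWardLah
  simp [h]

lemma fq (x : ℕ) : ((x+1).factorial : ℚ) = ((x:ℚ)+1) * x.factorial := by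
  rw [Nat.factorial_succ]; push_cast; ring

lemma bwl_eq (m j : ℕ) (h1 : 1 ≤ j) (h2 : j ≤ m) :
    binomialWardLah m j =
      ((2*m).factorial : ℚ) * ((m-1).factorial) /
        (j.factorial * ((m-j).factorial)^2 * (j-1).factorial) := by
  unfold binomialWardLah
  rw [if_neg (by omega), if_neg (by omega)]
  rw [Nat.cast_choose ℚ (by omega : j-1 ≤ m-1)]
  rw [show m - 1 - (j-1) = m - j from by omega]
  have f1 : (j.factorial : ℚ) ≠ 0 := by positivity
  have f2 : (((m-j).factorial : ℚ)) ≠ 0 := by positivity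
  have f3 : (((j-1).factorial : ℚ)) ≠ 0 := by positivity
  field_simp

set_option maxHeartbeats 2000000 in
lemma ratid (A B : ℚ) (N1 : A+1 ≠ 0) (N2 : A+2 ≠ 0) (N3 : A+3 ≠ 0)
    (N4 : B+1 ≠ 0) (N5 : B+2 ≠ 0) (G1 : A+B+5 ≠ 0) (G2 : 2*(A+B+5)-3 ≠ 0) :
    (2*A+2*B+10)*(2*A+2*B+9)*(2*A+2*B+8)*(2*A+2*B+7)*(A+B+4)*(A+B+3)
        / ((A+3)*(A+2)^2*(A+1)^2*(B+2)^2*(B+1)^2)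
    = (-4 * ((A+B+5) - 2) * (2 * (A+B+5) - 1) ^ 2 / (A+B+5)) *
        (1 / ((A+1)*(B+2)^2*(B+1)^2) - 2 * (1 / ((A+2)*(A+1)^2*(B+1)^2)) +
          1 / ((A+3)*(A+2)^2*(A+1)^2)) +
      (4 * (2 * (A+B+5) - 1) / ((A+B+5) * (2 * (A+B+5) - 3))) *
        ((2 * ((A+B+5) - 1) ^ 2 - 1) *
            ((2*A+2*B+8)*(2*A+2*B+7)*(A+B+3) / ((A+2)*(A+1)^2*(B+2)^2*(B+1)^2)) +
          2 * ((A+B+5) - 1) ^ 2 *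
            ((2*A+2*B+8)*(2*A+2*B+7)*(A+B+3) / ((A+3)*(A+2)^2*(A+1)^2*(B+1)^2))) := by
  field_simp
  ring

set_option maxHeartbeats 2000000 in
lemma case_gen (a b : ℕ) :
    binomialWardLah (a+b+5) (a+3) =
      (-4 * ((↑(a+b+5) : ℚ) - 2) * (2 * (↑(a+b+5) : ℚ) - 1) ^ 2 / ↑(a+b+5)) *
          (binomialWardLah (a+b+3) (a+1) - 2 * binomialWardLah (a+b+3) (a+2) +
            binomialWardLah (a+b+3) (a+3)) +
        (4 * (2 * (↑(a+b+5) : ℚ) - 1) / ((↑(a+b+5) : ℚ) * (2 * (↑(a+b+5) : ℚ) - 3))) *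
          ((2 * ((↑(a+b+5) : ℚ) - 1) ^ 2 - 1) * binomialWardLah (a+b+4) (a+2) +
            2 * ((↑(a+b+5) : ℚ) - 1) ^ 2 * binomialWardLah (a+b+4) (a+3)) := by
  have E1 : ((2*(a+b+5)).factorial : ℚ)
      = (2*(a:ℚ)+2*b+10)*(2*(a:ℚ)+2*b+9)*(2*(a:ℚ)+2*b+8)*(2*(a:ℚ)+2*b+7)*((2*(a+b+3)).factorial) := by
    rw [show 2*(a+b+5) = 2*(a+b+3)+1+1+1+1 from by ring]
    simp only [fq]; push_cast; ring
  have E2 : ((2*(a+b+4)).factorial : ℚ)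
      = (2*(a:ℚ)+2*b+8)*(2*(a:ℚ)+2*b+7)*((2*(a+b+3)).factorial) := by
    rw [show 2*(a+b+4) = 2*(a+b+3)+1+1 from by ring]
    simp only [fq]; push_cast; ring
  have E3 : ((a+b+4).factorial : ℚ) = ((a:ℚ)+(b:ℚ)+4)*((a:ℚ)+(b:ℚ)+3)*((a+b+2).factorial) := by
    rw [show a+b+4 = a+b+2+1+1 from by ring]
    simp only [fq]; push_cast; ring
  have E4 : ((a+b+3).factorial : ℚ) = ((a:ℚ)+(b:ℚ)+3)*((a+b+2).factorial) := by
    rw [show a+b+3 = a+b+2+1 from by ring]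
    simp only [fq]; push_cast; ring
  have E5 : ((a+3).factorial : ℚ) = ((a:ℚ)+3)*((a:ℚ)+2)*((a:ℚ)+1)*(a.factorial) := by
    rw [show a+3 = a+1+1+1 from by ring]
    simp only [fq]; push_cast; ring
  have E6 : ((a+2).factorial : ℚ) = ((a:ℚ)+2)*((a:ℚ)+1)*(a.factorial) := by
    rw [show a+2 = a+1+1 from by ring]
    simp only [fq]; push_cast; ring
  have E7 : ((a+1).factorial : ℚ) = ((a:ℚ)+1)*(a.factorial) := fq a
  have E8 : ((b+2).factorial : ℚ) = ((b:ℚ)+2)*((b:ℚ)+1)*(b.factorial) := by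
    rw [show b+2 = b+1+1 from by ring]
    simp only [fq]; push_cast; ring
  have E9 : ((b+1).factorial : ℚ) = ((b:ℚ)+1)*(b.factorial) := fq b
  have F1 : ((a.factorial : ℚ)) ≠ 0 := by positivity
  have F2 : ((b.factorial : ℚ)) ≠ 0 := by positivity
  have F3 : (((a+b+2).factorial : ℚ)) ≠ 0 := by positivity
  have F4 : (((2*(a+b+3)).factorial : ℚ)) ≠ 0 := by positivity
  have N1 : ((a:ℚ)+1) ≠ 0 := by positivity
  have N2 : ((a:ℚ)+2) ≠ 0 := by positivity
  have N3 : ((a:ℚ)+3) ≠ 0 := by positivity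
  have N4 : ((b:ℚ)+1) ≠ 0 := by positivity
  have N5 : ((b:ℚ)+2) ≠ 0 := by positivity
  have G1 : ((a:ℚ)+(b:ℚ)+5) ≠ 0 := by positivity
  have G2 : (2*((a:ℚ)+(b:ℚ)+5)-3) ≠ 0 := by
    have ha : (0:ℚ) ≤ (a:ℚ) := Nat.cast_nonneg a
    have hb : (0:ℚ) ≤ (b:ℚ) := Nat.cast_nonneg b
    intro h; linarith
  set Q : ℚ := ((2*(a+b+3)).factorial : ℚ) * ((a+b+2).factorial) / (a.factorial^2 * b.factorial^2) with hQ
  have h1 : binomialWardLah (a+b+5) (a+3)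
      = (2*(a:ℚ)+2*b+10)*(2*(a:ℚ)+2*b+9)*(2*(a:ℚ)+2*b+8)*(2*(a:ℚ)+2*b+7)*((a:ℚ)+(b:ℚ)+4)*((a:ℚ)+(b:ℚ)+3)
        / (((a:ℚ)+3)*((a:ℚ)+2)^2*((a:ℚ)+1)^2*((b:ℚ)+2)^2*((b:ℚ)+1)^2) * Q := by
    rw [bwl_eq (a+b+5) (a+3) (by omega) (by omega),
        show a+b+5-1 = a+b+4 from by omega, show a+b+5-(a+3) = b+2 from by omega,
        show a+3-1 = a+2 from by omega, E1, E3, E5, E6, E8, hQ]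
    field_simp
  have h2 : binomialWardLah (a+b+4) (a+2)
      = (2*(a:ℚ)+2*b+8)*(2*(a:ℚ)+2*b+7)*((a:ℚ)+(b:ℚ)+3)
        / (((a:ℚ)+2)*((a:ℚ)+1)^2*((b:ℚ)+2)^2*((b:ℚ)+1)^2) * Q := by
    rw [bwl_eq (a+b+4) (a+2) (by omega) (by omega),
        show a+b+4-1 = a+b+3 from by omega, show a+b+4-(a+2) = b+2 from by omega,
        show a+2-1 = a+1 from by omega, E2, E4, E6, E7, E8, hQ]
    field_simp
  have h3 : binomialWardLah (a+b+4) (a+3)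
      = (2*(a:ℚ)+2*b+8)*(2*(a:ℚ)+2*b+7)*((a:ℚ)+(b:ℚ)+3)
        / (((a:ℚ)+3)*((a:ℚ)+2)^2*((a:ℚ)+1)^2*((b:ℚ)+1)^2) * Q := by
    rw [bwl_eq (a+b+4) (a+3) (by omega) (by omega),
        show a+b+4-1 = a+b+3 from by omega, show a+b+4-(a+3) = b+1 from by omega,
        show a+3-1 = a+2 from by omega, E2, E4, E5, E6, E9, hQ]
    field_simp
  have h4 : binomialWardLah (a+b+3) (a+1)
      = 1 / (((a:ℚ)+1)*((b:ℚ)+2)^2*((b:ℚ)+1)^2) * Q := by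
    rw [bwl_eq (a+b+3) (a+1) (by omega) (by omega),
        show a+b+3-1 = a+b+2 from by omega, show a+b+3-(a+1) = b+2 from by omega,
        show a+1-1 = a from by omega, E7, E8, hQ]
    field_simp
  have h5 : binomialWardLah (a+b+3) (a+2)
      = 1 / (((a:ℚ)+2)*((a:ℚ)+1)^2*((b:ℚ)+1)^2) * Q := by
    rw [bwl_eq (a+b+3) (a+2) (by omega) (by omega),
        show a+b+3-1 = a+b+2 from by omega, show a+b+3-(a+2) = b+1 from by omega,
        show a+2-1 = a+1 from by omega, E6, E7, E9, hQ]
    field_simp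
  have h6 : binomialWardLah (a+b+3) (a+3)
      = 1 / (((a:ℚ)+3)*((a:ℚ)+2)^2*((a:ℚ)+1)^2) * Q := by
    rw [bwl_eq (a+b+3) (a+3) (by omega) (by omega),
        show a+b+3-1 = a+b+2 from by omega, show a+b+3-(a+3) = b from by omega,
        show a+3-1 = a+2 from by omega, E5, E6, hQ]
    field_simp
  have key := ratid (a:ℚ) (b:ℚ) N1 N2 N3 N4 N5 G1 G2
  rw [h1, h2, h3, h4, h5, h6]
  push_cast
  linear_combination Q * key
-- case n = k = a+3 (d = 0, j = a+1)
set_option maxHeartbeats 1000000 in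
lemma case_d0 (a : ℕ) :
    binomialWardLah (a+3) (a+3) =
      (-4 * ((↑(a+3) : ℚ) - 2) * (2 * (↑(a+3) : ℚ) - 1) ^ 2 / ↑(a+3)) *
          (binomialWardLah (a+1) (a+1) - 2 * binomialWardLah (a+1) (a+2) +
            binomialWardLah (a+1) (a+3)) +
        (4 * (2 * (↑(a+3) : ℚ) - 1) / ((↑(a+3) : ℚ) * (2 * (↑(a+3) : ℚ) - 3))) *
          ((2 * ((↑(a+3) : ℚ) - 1) ^ 2 - 1) * binomialWardLah (a+2) (a+2) +
            2 * ((↑(a+3) : ℚ) - 1) ^ 2 * binomialWardLah (a+2) (a+3)) := by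
  rw [bwl_zero (a+1) (a+2) (by omega), bwl_zero (a+1) (a+3) (by omega),
      bwl_zero (a+2) (a+3) (by omega),
      bwl_eq (a+3) (a+3) (by omega) (by omega),
      bwl_eq (a+2) (a+2) (by omega) (by omega),
      bwl_eq (a+1) (a+1) (by omega) (by omega),
      show a+3-1 = a+2 from by omega, show a+3-(a+3) = 0 from by omega,
      show a+2-1 = a+1 from by omega, show a+2-(a+2) = 0 from by omega,
      show a+1-1 = a from by omega, show a+1-(a+1) = 0 from by omega]
  have E1 : ((2*(a+3)).factorial : ℚ)
      = (2*(a:ℚ)+6)*(2*(a:ℚ)+5)*(2*(a:ℚ)+4)*(2*(a:ℚ)+3)*((2*(a+1)).factorial) := by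
    rw [show 2*(a+3) = 2*(a+1)+1+1+1+1 from by ring]
    simp only [fq]; push_cast; ring
  have E2 : ((2*(a+2)).factorial : ℚ)
      = (2*(a:ℚ)+4)*(2*(a:ℚ)+3)*((2*(a+1)).factorial) := by
    rw [show 2*(a+2) = 2*(a+1)+1+1 from by ring]
    simp only [fq]; push_cast; ring
  have E5 : ((a+3).factorial : ℚ) = ((a:ℚ)+3)*((a:ℚ)+2)*((a:ℚ)+1)*(a.factorial) := by
    rw [show a+3 = a+1+1+1 from by ring]
    simp only [fq]; push_cast; ring
  have E6 : ((a+2).factorial : ℚ) = ((a:ℚ)+2)*((a:ℚ)+1)*(a.factorial) := by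
    rw [show a+2 = a+1+1 from by ring]
    simp only [fq]; push_cast; ring
  have E7 : ((a+1).factorial : ℚ) = ((a:ℚ)+1)*(a.factorial) := fq a
  rw [E1, E2, E5, E6, E7, Nat.factorial_zero]
  have F1 : ((a.factorial : ℚ)) ≠ 0 := by positivity
  have F4 : (((2*(a+1)).factorial : ℚ)) ≠ 0 := by positivity
  have N1 : ((a:ℚ)+1) ≠ 0 := by positivity
  have N2 : ((a:ℚ)+2) ≠ 0 := by positivity
  have N3 : ((a:ℚ)+3) ≠ 0 := by positivity
  have G2 : (2*((a:ℚ)+3)-3) ≠ 0 := by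
    have ha : (0:ℚ) ≤ (a:ℚ) := Nat.cast_nonneg a
    intro h; linarith
  push_cast
  field_simp
  ring

-- case n = a+4, k = a+3 (d = 1, j = a+1)
set_option maxHeartbeats 1000000 in
lemma case_d1 (a : ℕ) :
    binomialWardLah (a+4) (a+3) =
      (-4 * ((↑(a+4) : ℚ) - 2) * (2 * (↑(a+4) : ℚ) - 1) ^ 2 / ↑(a+4)) *
          (binomialWardLah (a+2) (a+1) - 2 * binomialWardLah (a+2) (a+2) +
            binomialWardLah (a+2) (a+3)) +
        (4 * (2 * (↑(a+4) : ℚ) - 1) / ((↑(a+4) : ℚ) * (2 * (↑(a+4) : ℚ) - 3))) *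
          ((2 * ((↑(a+4) : ℚ) - 1) ^ 2 - 1) * binomialWardLah (a+3) (a+2) +
            2 * ((↑(a+4) : ℚ) - 1) ^ 2 * binomialWardLah (a+3) (a+3)) := by
  rw [bwl_zero (a+2) (a+3) (by omega),
      bwl_eq (a+4) (a+3) (by omega) (by omega),
      bwl_eq (a+3) (a+2) (by omega) (by omega),
      bwl_eq (a+3) (a+3) (by omega) (by omega),
      bwl_eq (a+2) (a+1) (by omega) (by omega),
      bwl_eq (a+2) (a+2) (by omega) (by omega),
      show a+4-1 = a+3 from by omega, show a+4-(a+3) = 1 from by omega,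
      show a+3-1 = a+2 from by omega, show a+3-(a+2) = 1 from by omega,
      show a+3-(a+3) = 0 from by omega,
      show a+2-1 = a+1 from by omega, show a+2-(a+1) = 1 from by omega,
      show a+2-(a+2) = 0 from by omega, show a+1-1 = a from by omega]
  have E1 : ((2*(a+4)).factorial : ℚ)
      = (2*(a:ℚ)+8)*(2*(a:ℚ)+7)*(2*(a:ℚ)+6)*(2*(a:ℚ)+5)*((2*(a+2)).factorial) := by
    rw [show 2*(a+4) = 2*(a+2)+1+1+1+1 from by ring]
    simp only [fq]; push_cast; ring
  have E2 : ((2*(a+3)).factorial : ℚ)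
      = (2*(a:ℚ)+6)*(2*(a:ℚ)+5)*((2*(a+2)).factorial) := by
    rw [show 2*(a+3) = 2*(a+2)+1+1 from by ring]
    simp only [fq]; push_cast; ring
  have E5 : ((a+3).factorial : ℚ) = ((a:ℚ)+3)*((a:ℚ)+2)*((a:ℚ)+1)*(a.factorial) := by
    rw [show a+3 = a+1+1+1 from by ring]
    simp only [fq]; push_cast; ring
  have E6 : ((a+2).factorial : ℚ) = ((a:ℚ)+2)*((a:ℚ)+1)*(a.factorial) := by
    rw [show a+2 = a+1+1 from by ring]
    simp only [fq]; push_cast; ring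
  have E7 : ((a+1).factorial : ℚ) = ((a:ℚ)+1)*(a.factorial) := fq a
  rw [E1, E2, E5, E6, E7, Nat.factorial_zero, Nat.factorial_one]
  have F1 : ((a.factorial : ℚ)) ≠ 0 := by positivity
  have F4 : (((2*(a+2)).factorial : ℚ)) ≠ 0 := by positivity
  have N1 : ((a:ℚ)+1) ≠ 0 := by positivity
  have N2 : ((a:ℚ)+2) ≠ 0 := by positivity
  have N3 : ((a:ℚ)+3) ≠ 0 := by positivity
  have G2 : (2*((a:ℚ)+4)-3) ≠ 0 := by
    have ha : (0:ℚ) ≤ (a:ℚ) := Nat.cast_nonneg a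
    intro h; linarith
  push_cast
  field_simp
  ring

-- case n = b+4, k = 2 (d = b+2, j = 0)
set_option maxHeartbeats 1000000 in
lemma case_k2 (b : ℕ) :
    binomialWardLah (b+4) 2 =
      (-4 * ((↑(b+4) : ℚ) - 2) * (2 * (↑(b+4) : ℚ) - 1) ^ 2 / ↑(b+4)) *
          (binomialWardLah (b+2) 0 - 2 * binomialWardLah (b+2) 1 +
            binomialWardLah (b+2) 2) +
        (4 * (2 * (↑(b+4) : ℚ) - 1) / ((↑(b+4) : ℚ) * (2 * (↑(b+4) : ℚ) - 3))) *
          ((2 * ((↑(b+4) : ℚ) - 1) ^ 2 - 1) * binomialWardLah (b+3) 1 +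
            2 * ((↑(b+4) : ℚ) - 1) ^ 2 * binomialWardLah (b+3) 2) := by
  rw [bwl_k0 (b+2) (by omega),
      bwl_eq (b+4) 2 (by omega) (by omega),
      bwl_eq (b+3) 1 (by omega) (by omega),
      bwl_eq (b+3) 2 (by omega) (by omega),
      bwl_eq (b+2) 1 (by omega) (by omega),
      bwl_eq (b+2) 2 (by omega) (by omega),
      show b+4-1 = b+3 from by omega, show b+4-2 = b+2 from by omega,
      show b+3-1 = b+2 from by omega, show b+3-2 = b+1 from by omega,
      show b+2-1 = b+1 from by omega, show b+2-2 = b from by omega,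
      show (2:ℕ)-1 = 1 from by omega, show (1:ℕ)-1 = 0 from by omega]
  have E1 : ((2*(b+4)).factorial : ℚ)
      = (2*(b:ℚ)+8)*(2*(b:ℚ)+7)*(2*(b:ℚ)+6)*(2*(b:ℚ)+5)*((2*(b+2)).factorial) := by
    rw [show 2*(b+4) = 2*(b+2)+1+1+1+1 from by ring]
    simp only [fq]; push_cast; ring
  have E2 : ((2*(b+3)).factorial : ℚ)
      = (2*(b:ℚ)+6)*(2*(b:ℚ)+5)*((2*(b+2)).factorial) := by
    rw [show 2*(b+3) = 2*(b+2)+1+1 from by ring]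
    simp only [fq]; push_cast; ring
  have E5 : ((b+3).factorial : ℚ) = ((b:ℚ)+3)*((b:ℚ)+2)*((b:ℚ)+1)*(b.factorial) := by
    rw [show b+3 = b+1+1+1 from by ring]
    simp only [fq]; push_cast; ring
  have E6 : ((b+2).factorial : ℚ) = ((b:ℚ)+2)*((b:ℚ)+1)*(b.factorial) := by
    rw [show b+2 = b+1+1 from by ring]
    simp only [fq]; push_cast; ring
  have E7 : ((b+1).factorial : ℚ) = ((b:ℚ)+1)*(b.factorial) := fq b
  rw [E1, E2, E5, E6, E7, Nat.factorial_zero, Nat.factorial_one,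
      show Nat.factorial 2 = 2 from rfl]
  have F1 : ((b.factorial : ℚ)) ≠ 0 := by positivity
  have F4 : (((2*(b+2)).factorial : ℚ)) ≠ 0 := by positivity
  have N1 : ((b:ℚ)+1) ≠ 0 := by positivity
  have N2 : ((b:ℚ)+2) ≠ 0 := by positivity
  have N3 : ((b:ℚ)+3) ≠ 0 := by positivity
  have G2 : (2*((b:ℚ)+4)-3) ≠ 0 := by
    have hb : (0:ℚ) ≤ (b:ℚ) := Nat.cast_nonneg b
    intro h; linarith
  push_cast
  field_simp
  ring

-- numeric values
lemma bwl22 : binomialWardLah 2 2 = 12 := by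
  have h := bwl_eq 2 2 (by omega) (by omega)
  rw [show (2*2 : ℕ) = 4 from rfl, show (2-1 : ℕ) = 1 from rfl,
      show (2-2 : ℕ) = 0 from rfl,
      show Nat.factorial 4 = 24 from rfl, show Nat.factorial 2 = 2 from rfl,
      show Nat.factorial 1 = 1 from rfl, show Nat.factorial 0 = 1 from rfl] at h
  rw [h]; norm_num

lemma bwl11 : binomialWardLah 1 1 = 2 := by
  have h := bwl_eq 1 1 (by omega) (by omega)
  rw [show (2*1 : ℕ) = 2 from rfl, show (1-1 : ℕ) = 0 from rfl,
      show Nat.factorial 2 = 2 from rfl, show Nat.factorial 1 = 1 from rfl,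
      show Nat.factorial 0 = 1 from rfl] at h
  rw [h]; norm_num

lemma bwl32 : binomialWardLah 3 2 = 720 := by
  have h := bwl_eq 3 2 (by omega) (by omega)
  rw [show (2*3 : ℕ) = 6 from rfl, show (3-1 : ℕ) = 2 from rfl,
      show (3-2 : ℕ) = 1 from rfl,
      show Nat.factorial 6 = 720 from rfl, show Nat.factorial 2 = 2 from rfl,
      show Nat.factorial 1 = 1 from rfl] at h
  rw [h]; norm_num

lemma bwl21 : binomialWardLah 2 1 = 24 := by
  have h := bwl_eq 2 1 (by omega) (by omega)
  rw [show (2*2 : ℕ) = 4 from rfl, show (2-1 : ℕ) = 1 from rfl,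
      show (1-1 : ℕ) = 0 from rfl,
      show Nat.factorial 4 = 24 from rfl, show Nat.factorial 1 = 1 from rfl,
      show Nat.factorial 0 = 1 from rfl] at h
  rw [h]; norm_num

lemma bwl00 : binomialWardLah 0 0 = 1 := by
  unfold binomialWardLah; norm_num

lemma case22 :
    binomialWardLah 2 2 =
      (-4 * ((↑(2:ℕ) : ℚ) - 2) * (2 * (↑(2:ℕ) : ℚ) - 1) ^ 2 / ↑(2:ℕ)) *
          (binomialWardLah 0 0 - 2 * binomialWardLah 0 1 + binomialWardLah 0 2) +
        (4 * (2 * (↑(2:ℕ) : ℚ) - 1) / ((↑(2:ℕ) : ℚ) * (2 * (↑(2:ℕ) : ℚ) - 3))) *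
          ((2 * ((↑(2:ℕ) : ℚ) - 1) ^ 2 - 1) * binomialWardLah 1 1 +
            2 * ((↑(2:ℕ) : ℚ) - 1) ^ 2 * binomialWardLah 1 2) := by
  rw [bwl22, bwl00, bwl11, bwl_zero 0 1 (by omega), bwl_zero 0 2 (by omega),
      bwl_zero 1 2 (by omega)]
  norm_num

lemma case32 :
    binomialWardLah 3 2 =
      (-4 * ((↑(3:ℕ) : ℚ) - 2) * (2 * (↑(3:ℕ) : ℚ) - 1) ^ 2 / ↑(3:ℕ)) *
          (binomialWardLah 1 0 - 2 * binomialWardLah 1 1 + binomialWardLah 1 2) +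
        (4 * (2 * (↑(3:ℕ) : ℚ) - 1) / ((↑(3:ℕ) : ℚ) * (2 * (↑(3:ℕ) : ℚ) - 3))) *
          ((2 * ((↑(3:ℕ) : ℚ) - 1) ^ 2 - 1) * binomialWardLah 2 1 +
            2 * ((↑(3:ℕ) : ℚ) - 1) ^ 2 * binomialWardLah 2 2) := by
  rw [bwl32, bwl11, bwl21, bwl22, bwl_k0 1 (by omega), bwl_zero 1 2 (by omega)]
  norm_num

theorem binomialWardLah_order_five_rec (n k : ℕ) (hn : 2 ≤ n) (hk : 2 ≤ k) (hkn : k ≤ n) :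
    binomialWardLah n k =
      (-4 * ((n : ℚ) - 2) * (2 * (n : ℚ) - 1) ^ 2 / n) *
          (binomialWardLah (n - 2) (k - 2) - 2 * binomialWardLah (n - 2) (k - 1) +
            binomialWardLah (n - 2) k) +
        (4 * (2 * (n : ℚ) - 1) / ((n : ℚ) * (2 * (n : ℚ) - 3))) *
          ((2 * ((n : ℚ) - 1) ^ 2 - 1) * binomialWardLah (n - 1) (k - 1) +
            2 * ((n : ℚ) - 1) ^ 2 * binomialWardLah (n - 1) k) := by
  obtain ⟨j, rfl⟩ : ∃ j, k = j + 2 := ⟨k - 2, by omega⟩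
  obtain ⟨d, rfl⟩ : ∃ d, n = j + d + 2 := ⟨n - (j + 2), by omega⟩
  rw [show j+d+2-1 = j+d+1 from by omega, show j+d+2-2 = j+d from by omega,
      show j+2-1 = j+1 from by omega, show j+2-2 = j from by omega]
  obtain rfl | ⟨a, rfl⟩ : j = 0 ∨ ∃ a, j = a + 1 :=
    match j with | 0 => Or.inl rfl | (a+1) => Or.inr ⟨a, rfl⟩
  · obtain rfl | rfl | ⟨b, rfl⟩ : d = 0 ∨ d = 1 ∨ ∃ b, d = b + 2 :=
      match d with
      | 0 => Or.inl rfl | 1 => Or.inr (Or.inl rfl) | (b+2) => Or.inr (Or.inr ⟨b, rfl⟩)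
    · exact case22
    · exact case32
    · rw [show 0+(b+2)+2 = b+4 from by omega, show 0+(b+2)+1 = b+3 from by omega,
          show 0+(b+2) = b+2 from by omega, show (0:ℕ)+1 = 1 from rfl,
          show (0:ℕ)+2 = 2 from rfl]
      exact case_k2 b
  · obtain rfl | rfl | ⟨b, rfl⟩ : d = 0 ∨ d = 1 ∨ ∃ b, d = b + 2 :=
      match d with
      | 0 => Or.inl rfl | 1 => Or.inr (Or.inl rfl) | (b+2) => Or.inr (Or.inr ⟨b, rfl⟩)
    · rw [show a+1+0+2 = a+3 from by omega, show a+1+0+1 = a+2 from by omega,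
          show a+1+0 = a+1 from by omega, show a+1+2 = a+3 from by omega,
          show a+1+1 = a+2 from by omega]
      exact case_d0 a
    · rw [show a+1+1+2 = a+4 from by omega, show a+1+1+1 = a+3 from by omega,
          show a+1+2 = a+3 from by omega, show a+1+1 = a+2 from by omega]
      exact case_d1 a
    · rw [show a+1+(b+2)+2 = a+b+5 from by omega, show a+1+(b+2)+1 = a+b+4 from by omega,
          show a+1+(b+2) = a+b+3 from by omega, show a+1+2 = a+3 from by omega,
          show a+1+1 = a+2 from by omega]
      exact case_gen a b
end
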